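/- In Algorithm 3 (edge scalar tree construction), if edge e_j is a neighbor of e_i with j < i sharing vertex v, then when e_i is processed, the root of the subtree containing n(e_j) equals the root of the subtree containing n(v.min_id_edge), where v.min_id_edge is the edge incident to v of minimum index in the decreasing-scalar ordering. -/

import Mathlib

variable {V : Type*} [Fintype V] [DecidableEq V]

/-- Follow the parent pointers `p` for at most `k` steps. -/
def iterParent {α : Type*} (p : α → Option α) : ℕ → α → α
  | 0, a => a
  | k + 1, a =>
    match p a with
    | none => a
    | some b => iterParent p k b

/-- The root of the current subtree containing `a` in the forest `p`. -/
def rootOf {α : Type*} [Fintype α] (p : α → Option α) (a : α) : α :=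
  iterParent p (Fintype.card α) a

/-- `v.min_id_edge`: the edge incident to `v` of minimum index in the ordering `es`. -/
def minIdEdge (es : List (V × V)) (v : V) : Option (V × V) :=
  es.find? (fun e => e.1 = v || e.2 = v)

/-- Processing edge `e` in Algorithm 3: for each `m` among the `min_id_edge`s of
the two endpoints of `e` that was processed earlier (`m ≠ e`, since such an `m`
has minimal index) and lies in a subtree not containing `e`, make `n(e)` the
parent of the root of that subtree. -/
def stepEdge (es : List (V × V)) (e : V × V) (p : V × V → Option (V × V)) :
    V × V → Option (V × V) :=
  (([minIdEdge es e.1, minIdEdge es e.2]).filterMap id).foldl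
    (fun q m =>
      if m ≠ e ∧ rootOf q m ≠ e then Function.update q (rootOf q m) (some e) else q) p

/-- The parent assignment after the first `k` edges of `es` have been processed. -/
def stateAfter (es : List (V × V)) (k : ℕ) : V × V → Option (V × V) :=
  (es.take k).foldl (fun p e => stepEdge es e p) (fun _ => none)


attribute [-instance] instBEqProd

section Abstract
set_option linter.unusedSectionVars false

variable {α : Type*} [DecidableEq α]

theorem iterParent_none (p : α → Option α) {a : α} (h : p a = none) :
    ∀ n, iterParent p n a = a
  | 0 => rfl
  | n + 1 => by simp [iterParent, h]

theorem iterParent_add (p : α → Option α) (m n : ℕ) (a : α) :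
    iterParent p (m + n) a = iterParent p n (iterParent p m a) := by
  induction m generalizing a with
  | zero => simp [iterParent]
  | succ m ih =>
    have hmn : m + 1 + n = (m + n) + 1 := by omega
    rw [hmn]
    cases h : p a with
    | none => simp [iterParent, h, iterParent_none p h]
    | some b => simp [iterParent, h, ih]

theorem iterParent_ranked_none (p : α → Option α) (f : α → ℕ)
    (hR : ∀ x y, p x = some y → f y < f x) :
    ∀ n x, f x < n → p (iterParent p n x) = none := by
  intro n
  induction n with
  | zero => intro x hx; omega
  | succ n ih =>
    intro x hx
    cases h : p x with
    | none => simpa [iterParent, h] using h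
    | some b =>
      simp only [iterParent, h]
      exact ih b (by have := hR x b h; omega)

theorem rootOf_none [Fintype α] (p : α → Option α) (f : α → ℕ)
    (hR : ∀ x y, p x = some y → f y < f x)
    (hB : ∀ x, f x < Fintype.card α) (x : α) :
    p (rootOf p x) = none :=
  iterParent_ranked_none p f hR _ x (hB x)

theorem rootOf_of_none [Fintype α] (p : α → Option α) {x : α} (h : p x = none) :
    rootOf p x = x :=
  iterParent_none p h _

theorem rootOf_eq [Fintype α] (p : α → Option α) (f : α → ℕ)
    (hR : ∀ x y, p x = some y → f y < f x)
    (hB : ∀ x, f x < Fintype.card α) {n : ℕ} {x y : α}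
    (h1 : iterParent p n x = y) (h2 : p y = none) :
    rootOf p x = y := by
  rcases le_or_gt n (Fintype.card α) with h | h
  · have hN : Fintype.card α = n + (Fintype.card α - n) := by omega
    rw [rootOf, hN, iterParent_add, h1, iterParent_none p h2]
  · have hn : n = Fintype.card α + (n - Fintype.card α) := by omega
    rw [hn, iterParent_add] at h1
    have hroot : p (iterParent p (Fintype.card α) x) = none := rootOf_none p f hR hB x
    rw [iterParent_none p hroot] at h1
    exact h1

theorem iterParent_cases (p : α → Option α) :
    ∀ (n : ℕ) (x : α), iterParent p n x = x ∨ ∃ y, p y = some (iterParent p n x) := by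
  intro n
  induction n with
  | zero => intro x; exact Or.inl rfl
  | succ n ih =>
    intro x
    cases h : p x with
    | none => simp [iterParent, h]
    | some b =>
      simp only [iterParent, h]
      rcases ih b with hb | ⟨y, hy⟩
      · exact Or.inr ⟨x, by rw [hb]; exact h⟩
      · exact Or.inr ⟨y, hy⟩

theorem iterParent_update_ne (p : α → Option α) (r : α) (v : Option α) :
    ∀ (n : ℕ) (x : α), (∀ m, iterParent p m x ≠ r) →
      iterParent (Function.update p r v) n x = iterParent p n x := by
  intro n
  induction n with
  | zero => intro x _; rfl
  | succ n ih =>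
    intro x hx
    have hxr : x ≠ r := hx 0
    have hux : Function.update p r v x = p x := Function.update_of_ne hxr _ _
    cases h : p x with
    | none => simp [iterParent, hux, h]
    | some b =>
      simp only [iterParent, hux, h]
      refine ih b (fun m hc => hx (1 + m) ?_)
      rw [iterParent_add]
      simpa [iterParent, h] using hc

theorem rootOf_update_of_root_ne [Fintype α] (p : α → Option α) (f : α → ℕ)
    (hR : ∀ x y, p x = some y → f y < f x)
    (hB : ∀ x, f x < Fintype.card α) {r : α} (hr : p r = none) (v : Option α) {x : α}
    (hx : rootOf p x ≠ r) : rootOf (Function.update p r v) x = rootOf p x := by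
  have h1 : ∀ m, iterParent p m x ≠ r := fun m hm => hx (rootOf_eq p f hR hB hm hr)
  rw [rootOf, iterParent_update_ne p r v _ x h1]; rfl

theorem iterParent_update_first_hit (p : α → Option α) (r : α) (v : Option α) :
    ∀ (n : ℕ) (x : α), iterParent p n x = r → (∀ m, m < n → iterParent p m x ≠ r) →
      iterParent (Function.update p r v) n x = r := by
  intro n
  induction n with
  | zero => intro x h _; exact h
  | succ n ih =>
    intro x h hmin
    have hxr : x ≠ r := hmin 0 (Nat.succ_pos n)
    have hux : Function.update p r v x = p x := Function.update_of_ne hxr _ _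
    cases hpx : p x with
    | none => exact absurd (by simpa [iterParent, hpx] using h) hxr
    | some b =>
      simp only [iterParent, hux, hpx]
      refine ih b (by simpa [iterParent, hpx] using h) (fun m hm hc => ?_)
      exact hmin (m + 1) (by omega) (by
        have : iterParent p (1 + m) x = iterParent p m b := by
          rw [iterParent_add]; simp [iterParent, hpx]
        rw [Nat.add_comm m 1, this]; exact hc)

theorem rootOf_update_of_root_eq [Fintype α] (p : α → Option α) (f : α → ℕ)
    (hB : ∀ x, f x < Fintype.card α) {r e x : α}
    (hroot : rootOf p x = r) (hre : r ≠ e) (he : p e = none)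
    (hR' : ∀ a b, Function.update p r (some e) a = some b → f b < f a) :
    rootOf (Function.update p r (some e)) x = e := by
  classical
  have hex : ∃ n, iterParent p n x = r := ⟨Fintype.card α, hroot⟩
  set n0 := Nat.find hex with hn0
  have h0 : iterParent p n0 x = r := Nat.find_spec hex
  have hmin : ∀ m, m < n0 → iterParent p m x ≠ r := fun m hm => Nat.find_min hex hm
  have h1 : iterParent (Function.update p r (some e)) n0 x = r :=
    iterParent_update_first_hit p r (some e) n0 x h0 hmin
  have h2 : iterParent (Function.update p r (some e)) (n0 + 1) x = e := by
    rw [iterParent_add, h1]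
    simp [iterParent, Function.update_self]
  have he' : Function.update p r (some e) e = none := by
    rw [Function.update_of_ne (Ne.symm hre)]; exact he
  exact rootOf_eq _ f hR' hB h2 he'

end Abstract

section Concrete
set_option linter.unusedSectionVars false

variable {V : Type*} [Fintype V] [DecidableEq V]

/-- find? minimality w.r.t. indexOf. -/
theorem find?_indexOf_le {α : Type*} [DecidableEq α] {p : α → Bool} :
    ∀ {l : List α} {a b : α}, l.find? p = some a → b ∈ l → p b = true →
      l.idxOf a ≤ l.idxOf b := by
  intro l
  induction l with
  | nil => intro a b h; simp at h
  | cons c t ih =>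
    intro a b hf hb hpb
    by_cases hc : p c = true
    · rw [List.find?_cons_of_pos hc] at hf
      cases hf
      simp [List.idxOf_cons_self]
    · rw [List.find?_cons_of_neg (by simpa using hc)] at hf
      have hpa : p a = true := List.find?_some hf
      have hac : c ≠ a := fun h => hc (h ▸ hpa)
      rcases List.mem_cons.mp hb with rfl | hb
      · exact absurd hpb hc
      · have hbc : c ≠ b := fun h => hc (h ▸ hpb)
        rw [List.idxOf_cons_ne _ hac, List.idxOf_cons_ne _ hbc]
        exact Nat.succ_le_succ (ih hf hb hpb)

variable (es : List (V × V))

/-- rank function: decreasing along parent pointers. -/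
def fRank (x : V × V) : ℕ := es.length - 1 - es.idxOf x

/-- invariant on parent pointers with index bound `B`. -/
def H1 (B : ℕ) (q : V × V → Option (V × V)) : Prop :=
  ∀ x y, q x = some y → x ∈ es ∧ y ∈ es ∧ es.idxOf x < es.idxOf y ∧ es.idxOf y ≤ B

theorem hR_of_H1 {B : ℕ} {q : V × V → Option (V × V)} (h : H1 es B q) :
    ∀ x y, q x = some y → fRank es y < fRank es x := by
  intro x y hxy
  obtain ⟨hx, hy, hlt, -⟩ := h x y hxy
  have h1 : es.idxOf x < es.length := List.idxOf_lt_length_iff.mpr hx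
  have h2 : es.idxOf y < es.length := List.idxOf_lt_length_iff.mpr hy
  simp only [fRank]; omega

theorem hB_of_nodup (hnd : es.Nodup) : ∀ x : V × V, fRank es x < Fintype.card (V × V) := by
  intro x
  have h1 : es.length ≤ Fintype.card (V × V) := hnd.length_le_card
  have h2 : 0 < Fintype.card (V × V) := Fintype.card_pos_iff.mpr ⟨x⟩
  simp only [fRank]; omega

/-- any element reachable from x is x or in the range of q. -/
theorem rootOf_mem {B : ℕ} {q : V × V → Option (V × V)} (h : H1 es B q) (x : V × V) :
    rootOf q x = x ∨ (rootOf q x ∈ es ∧ es.idxOf (rootOf q x) ≤ B) := by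
  rcases iterParent_cases q (Fintype.card (V × V)) x with hx | ⟨y, hy⟩
  · exact Or.inl hx
  · obtain ⟨-, h2, -, h4⟩ := h y _ hy
    exact Or.inr ⟨h2, h4⟩

end Concrete

section Ops
set_option linter.unusedSectionVars false

variable {V : Type*} [Fintype V] [DecidableEq V]

/-- the elementary operation of `stepEdge`. -/
def opE (e : V × V) (q : V × V → Option (V × V)) (m : V × V) : V × V → Option (V × V) :=
  if m ≠ e ∧ rootOf q m ≠ e then Function.update q (rootOf q m) (some e) else q

variable {es : List (V × V)} {e : V × V} {k : ℕ} {q : V × V → Option (V × V)} {m : V × V}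

theorem idx_lt_of_ne (hnd : es.Nodup) (hk : k < es.length) (hke : es.get ⟨k, hk⟩ = e)
    {y : V × V} (hy : y ∈ es) (hyk : es.idxOf y ≤ k) (hne : y ≠ e) :
    es.idxOf y < k := by
  rcases Nat.lt_or_ge (es.idxOf y) k with h | h
  · exact h
  · exfalso
    have hik : es.idxOf y = k := le_antisymm hyk h
    have hlen : es.idxOf y < es.length := List.idxOf_lt_length_iff.mpr hy
    have h1 : es.get ⟨es.idxOf y, hlen⟩ = y := List.idxOf_get hlen
    have h2 : (⟨es.idxOf y, hlen⟩ : Fin es.length) = ⟨k, hk⟩ := by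
      apply Fin.ext; exact hik
    rw [h2] at h1
    exact hne (h1.symm.trans hke)

theorem qe_none (hnd : es.Nodup) (hk : k < es.length) (hke : es.get ⟨k, hk⟩ = e)
    (hq : H1 es k q) : q e = none := by
  cases h : q e with
  | none => rfl
  | some y =>
    obtain ⟨hx, hy, hlt, hb⟩ := hq e y h
    have : es.idxOf e = k := hke ▸ List.get_idxOf hnd _
    omega

theorem opE_H1 (hnd : es.Nodup) (hk : k < es.length) (hke : es.get ⟨k, hk⟩ = e)
    (hq : H1 es k q) (hm_mem : m ∈ es) (hm_idx : es.idxOf m ≤ k) :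
    H1 es k (opE e q m) := by
  rw [opE]
  split
  · rename_i hguard
    obtain ⟨hme, hre⟩ := hguard
    have hidxe : es.idxOf e = k := hke ▸ List.get_idxOf hnd _
    have hr : rootOf q m ∈ es ∧ es.idxOf (rootOf q m) ≤ k := by
      rcases rootOf_mem es hq m with h | h
      · rw [h]; exact ⟨hm_mem, hm_idx⟩
      · exact h
    have hrlt : es.idxOf (rootOf q m) < k := idx_lt_of_ne hnd hk hke hr.1 hr.2 hre
    intro x y hxy
    by_cases hx : x = rootOf q m
    · subst hx
      rw [Function.update_self] at hxy
      cases hxy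
      refine ⟨hr.1, ?_, ?_, ?_⟩
      · rw [← hke]; exact List.get_mem _ _
      · rw [hidxe]; exact hrlt
      · rw [hidxe]
    · rw [Function.update_of_ne hx] at hxy
      exact hq x y hxy
  · exact hq

theorem opE_e_none (hnd : es.Nodup) (hk : k < es.length) (hke : es.get ⟨k, hk⟩ = e)
    (hq : H1 es k q) : opE e q m e = none := by
  have hqe : q e = none := qe_none hnd hk hke hq
  rw [opE]
  split
  · rename_i hguard
    rw [Function.update_of_ne (Ne.symm hguard.2)]
    exact hqe
  · exact hqe

theorem opE_root_pres (hnd : es.Nodup) (hk : k < es.length) (hke : es.get ⟨k, hk⟩ = e)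
    (hq : H1 es k q) (hm_mem : m ∈ es) (hm_idx : es.idxOf m ≤ k) {x y : V × V}
    (hxy : rootOf q x = rootOf q y) :
    rootOf (opE e q m) x = rootOf (opE e q m) y := by
  have hR : ∀ a b, q a = some b → fRank es b < fRank es a := hR_of_H1 es hq
  have hB : ∀ a : V × V, fRank es a < Fintype.card (V × V) := hB_of_nodup es hnd
  have hqe : q e = none := qe_none hnd hk hke hq
  have hR' : ∀ a b, opE e q m a = some b → fRank es b < fRank es a :=
    hR_of_H1 es (opE_H1 hnd hk hke hq hm_mem hm_idx)
  rw [opE] at hR' ⊢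
  split
  · rename_i hguard
    split at hR'
    · set r := rootOf q m with hr
      have hrnone : q r = none := rootOf_none q (fRank es) hR hB m
      by_cases hx : rootOf q x = r
      · rw [rootOf_update_of_root_eq q (fRank es) hB hx hguard.2 hqe hR',
          rootOf_update_of_root_eq q (fRank es) hB (hxy ▸ hx) hguard.2 hqe hR']
      · rw [rootOf_update_of_root_ne q (fRank es) hR hB hrnone _ hx,
          rootOf_update_of_root_ne q (fRank es) hR hB hrnone _ (fun hc => hx (hxy ▸ hc)),
          hxy]
    · exact absurd hguard (by assumption)
  · exact hxy

theorem opE_root_m (hnd : es.Nodup) (hk : k < es.length) (hke : es.get ⟨k, hk⟩ = e)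
    (hq : H1 es k q) (hm_mem : m ∈ es) (hm_idx : es.idxOf m ≤ k) :
    rootOf (opE e q m) m = e := by
  have hR : ∀ a b, q a = some b → fRank es b < fRank es a := hR_of_H1 es hq
  have hB : ∀ a : V × V, fRank es a < Fintype.card (V × V) := hB_of_nodup es hnd
  have hqe : q e = none := qe_none hnd hk hke hq
  have hR' : ∀ a b, opE e q m a = some b → fRank es b < fRank es a :=
    hR_of_H1 es (opE_H1 hnd hk hke hq hm_mem hm_idx)
  rw [opE] at hR' ⊢
  split
  · rename_i hguard
    split at hR'
    · exact rootOf_update_of_root_eq q (fRank es) hB rfl hguard.2 hqe hR'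
    · exact absurd hguard (by assumption)
  · rename_i hguard
    rcases not_and_or.mp hguard with h | h
    · push_neg at h
      rw [h, rootOf_of_none q hqe]
    · push_neg at h
      exact h

theorem opE_root_e (hnd : es.Nodup) (hk : k < es.length) (hke : es.get ⟨k, hk⟩ = e)
    (hq : H1 es k q) : rootOf (opE e q m) e = e :=
  rootOf_of_none _ (opE_e_none hnd hk hke hq)

end Ops

section Main
set_option linter.unusedSectionVars false

variable {V : Type*} [Fintype V] [DecidableEq V]

/-- The full invariant of Algorithm 3 after `k` edges have been processed. -/
def AlgInv (es : List (V × V)) (k : ℕ) (p : V × V → Option (V × V)) : Prop :=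
  H1 es k p ∧
  ∀ v (m : V × V), minIdEdge es v = some m → ∀ j : Fin es.length, (j : ℕ) < k →
    ((es.get j).1 = v ∨ (es.get j).2 = v) → rootOf p (es.get j) = rootOf p m

theorem H1_mono {es : List (V × V)} {B B' : ℕ} (h : B ≤ B')
    {q : V × V → Option (V × V)} (hq : H1 es B q) : H1 es B' q := by
  intro x y hxy
  obtain ⟨h1, h2, h3, h4⟩ := hq x y hxy
  exact ⟨h1, h2, h3, le_trans h4 h⟩

theorem algInv_step {es : List (V × V)} (hnd : es.Nodup) {k : ℕ} (hk : k < es.length)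
    {p : V × V → Option (V × V)} (hp : AlgInv es k p) :
    AlgInv es (k + 1) (stepEdge es (es.get ⟨k, hk⟩) p) := by
  obtain ⟨h1, h3⟩ := hp
  set e := es.get ⟨k, hk⟩ with hke'
  have hke : es.get ⟨k, hk⟩ = e := rfl
  have he_mem : e ∈ es := by rw [← hke]; exact List.get_mem _ _
  have hidxe : es.idxOf e = k := by rw [← hke]; exact List.get_idxOf hnd _
  obtain ⟨ma, hma⟩ : ∃ ma, minIdEdge es e.1 = some ma := by
    rw [minIdEdge]
    exact Option.isSome_iff_exists.mp (List.find?_isSome.mpr ⟨e, he_mem, by simp⟩)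
  obtain ⟨mb, hmb⟩ : ∃ mb, minIdEdge es e.2 = some mb := by
    rw [minIdEdge]
    exact Option.isSome_iff_exists.mp (List.find?_isSome.mpr ⟨e, he_mem, by simp⟩)
  have hma_mem : ma ∈ es := List.mem_of_find?_eq_some hma
  have hmb_mem : mb ∈ es := List.mem_of_find?_eq_some hmb
  have hma_idx : es.idxOf ma ≤ k := by
    have h := find?_indexOf_le hma he_mem (by simp)
    rwa [hidxe] at h
  have hmb_idx : es.idxOf mb ≤ k := by
    have h := find?_indexOf_le hmb he_mem (by simp)
    rwa [hidxe] at h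
  have hstep : stepEdge es e p = opE e (opE e p ma) mb := by
    rw [stepEdge, hma, hmb]; rfl
  have hq1 : H1 es k (opE e p ma) := opE_H1 hnd hk hke h1 hma_mem hma_idx
  constructor
  · rw [hstep]
    exact H1_mono (Nat.le_succ k) (opE_H1 hnd hk hke hq1 hmb_mem hmb_idx)
  · intro v m hm j hj hjv
    rw [hstep]
    rcases Nat.lt_or_ge (j : ℕ) k with hjk | hjk
    · exact opE_root_pres hnd hk hke hq1 hmb_mem hmb_idx
        (opE_root_pres hnd hk hke h1 hma_mem hma_idx (h3 v m hm j hjk hjv))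
    · have hjeq : j = ⟨k, hk⟩ := Fin.ext (show (j : ℕ) = k by omega)
      rw [hjeq] at hjv ⊢
      have r1 : rootOf (opE e p ma) ma = e := opE_root_m hnd hk hke h1 hma_mem hma_idx
      have r2 : rootOf (opE e p ma) e = e := opE_root_e hnd hk hke h1
      have r3 : rootOf (opE e (opE e p ma) mb) ma = rootOf (opE e (opE e p ma) mb) e :=
        opE_root_pres hnd hk hke hq1 hmb_mem hmb_idx (r1.trans r2.symm)
      have r4 : rootOf (opE e (opE e p ma) mb) mb = e :=
        opE_root_m hnd hk hke hq1 hmb_mem hmb_idx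
      have r5 : rootOf (opE e (opE e p ma) mb) e = e := opE_root_e hnd hk hke hq1
      rcases hjv with h | h
    -- v = e.1 or e.2
      · rw [← h] at hm
        rw [hma] at hm
        cases hm
        exact r5.trans (r3.trans r5).symm
      · rw [← h] at hm
        rw [hmb] at hm
        cases hm
        exact r5.trans r4.symm

theorem algInv_stateAfter {es : List (V × V)} (hnd : es.Nodup) :
    ∀ k, k ≤ es.length → AlgInv es k (stateAfter es k) := by
  intro k
  induction k with
  | zero =>
    intro _
    constructor
    · intro x y h; simp [stateAfter] at h
    · intro v m hm j hj; omega
  | succ k ih =>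
    intro hk1
    have hk : k < es.length := by omega
    have hstate : stateAfter es (k + 1) = stepEdge es (es.get ⟨k, hk⟩) (stateAfter es k) := by
      rw [stateAfter, stateAfter, ← List.take_concat_get hk, List.concat_eq_append,
        List.foldl_append]
      rfl
    rw [hstate]
    exact algInv_step hnd hk (ih (le_of_lt hk))

end Main


/-- In Algorithm 3, if `e_j` is a neighbor of `e_i` with `j < i` sharing vertex
`v`, then when `e_i` is processed, the root of the subtree containing `n(e_j)`
equals the root of the subtree containing `n(v.min_id_edge)`. -/
theorem stmt13 (g : V × V → ℝ) (es : List (V × V)) (hnd : es.Nodup)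
    (hsort : es.Pairwise (fun a b => g b ≤ g a))
    (i j : Fin es.length) (hij : (j : ℕ) < (i : ℕ)) (v : V)
    (hjv : (es.get j).1 = v ∨ (es.get j).2 = v)
    (hiv : (es.get i).1 = v ∨ (es.get i).2 = v)
    (m : V × V) (hm : minIdEdge es v = some m) :
    rootOf (stateAfter es i) (es.get j) = rootOf (stateAfter es i) m := by
  exact (algInv_stateAfter hnd i (le_of_lt i.isLt)).2 v m hm j hij hjv
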